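/- If φ : G → B is a graph fibration and an algorithm A δ-computes a function f (of the input values) on both graphs G and B, then for every valuation v of the vertices of B, f(v^φ) = f(v), where v^φ is the fibrewise lifting of v. -/

import Mathlib

/-- If `φ : G → B` is a graph fibration, and an algorithm (with states `Q`, messages
`M`, broadcast sending function `σ`, transition function `δ`, input encoding
`ι : Ω → Q`, and output decoding `out : Q → X` into a metric space `X`) δ-computes a
function `f` of the input values on both graphs `G` and `B` — meaning that in every
execution starting from any valuation, every agent's output converges to the value of
`f` on the inputs — then for every valuation `v` of the vertices of `B`,
`f(v^φ) = f(v)`, where `v^φ := v ∘ φV` is the fibrewise lifting of `v`. -/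
theorem stmt13 {VG EG VB EB Q M Ω X : Type}
    [Fintype VG] [Fintype EG] [Fintype VB] [Fintype EB]
    [DecidableEq VG] [DecidableEq VB] [MetricSpace X]
    (sG tG : EG → VG) (sB tB : EB → VB)
    (φV : VG → VB) (φE : EG → EB)
    (hs : ∀ e, sB (φE e) = φV (sG e)) (ht : ∀ e, tB (φE e) = φV (tG e))
    (hVsurj : Function.Surjective φV) (hEsurj : Function.Surjective φE)
    (hlift : ∀ (e : EB) (i : VG), φV i = tB e → ∃! f : EG, φE f = e ∧ tG f = i)
    (σ : Q → M) (δ : Q → Multiset M → Q) (ι : Ω → Q) (out : Q → X)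
    (f : Multiset Ω → X)
    (hcompB : ∀ (v : VB → Ω) (C : ℕ → VB → Q),
      C 0 = (fun i => ι (v i)) →
      (∀ k, C (k + 1) = fun i => δ (C k i)
        ((Finset.univ.val.filter (fun e => tB e = i)).map (fun e => σ (C k (sB e))))) →
      ∀ i, Filter.Tendsto (fun k => out (C k i)) Filter.atTop
        (nhds (f (Multiset.map v Finset.univ.val))))
    (hcompG : ∀ (v : VG → Ω) (C : ℕ → VG → Q),
      C 0 = (fun i => ι (v i)) →
      (∀ k, C (k + 1) = fun i => δ (C k i)
        ((Finset.univ.val.filter (fun e => tG e = i)).map (fun e => σ (C k (sG e))))) →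
      ∀ i, Filter.Tendsto (fun k => out (C k i)) Filter.atTop
        (nhds (f (Multiset.map v Finset.univ.val)))) :
    ∀ v : VB → Ω,
      f (Multiset.map (fun i => v (φV i)) Finset.univ.val) =
        f (Multiset.map v Finset.univ.val) := by
  classical
  intro v
  by_cases hne : Nonempty VG
  · obtain ⟨i0⟩ := hne
    -- execution on B
    set C : ℕ → VB → Q := fun k => Nat.rec (fun i => ι (v i))
      (fun _ prev => fun i => δ (prev i)
        ((Finset.univ.val.filter (fun e => tB e = i)).map (fun e => σ (prev (sB e))))) k
      with hC
    have hC0 : C 0 = fun i => ι (v i) := rfl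
    have hCk : ∀ k, C (k + 1) = fun i => δ (C k i)
        ((Finset.univ.val.filter (fun e => tB e = i)).map (fun e => σ (C k (sB e)))) :=
      fun k => rfl
    -- lifted execution on G
    set D : ℕ → VG → Q := fun k i => C k (φV i) with hD
    -- edge-fibre bijection
    have key : ∀ i : VG, (Finset.univ.filter (fun e => tB e = φV i)) =
        (Finset.univ.filter (fun e => tG e = i)).image φE := by
      intro i
      ext e'
      simp only [Finset.mem_filter, Finset.mem_image, Finset.mem_univ, true_and]
      constructor
      · intro h
        obtain ⟨g, ⟨hg1, hg2⟩, _⟩ := hlift e' i h.symm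
        exact ⟨g, hg2, hg1⟩
      · rintro ⟨g, hg, rfl⟩
        rw [ht, hg]
    have inj : ∀ i : VG, Set.InjOn φE (Finset.univ.filter (fun e => tG e = i)) := by
      intro i a ha b hb hab
      simp only [Finset.coe_filter, Set.mem_setOf_eq] at ha hb
      have hta : φV i = tB (φE a) := by rw [ht, ha.2]
      obtain ⟨g, _, hg⟩ := hlift (φE a) i hta
      have h1 := hg a ⟨rfl, ha.2⟩
      have h2 := hg b ⟨hab.symm, hb.2⟩
      rw [h1, h2]
    -- D satisfies the G recurrence
    have hD0 : D 0 = fun i => ι (v (φV i)) := rfl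
    have hDk : ∀ k, D (k + 1) = fun i => δ (D k i)
        ((Finset.univ.val.filter (fun e => tG e = i)).map (fun e => σ (D k (sG e)))) := by
      intro k
      funext i
      show δ (C k (φV i))
        ((Finset.univ.val.filter (fun e => tB e = φV i)).map (fun e => σ (C k (sB e)))) = _
      congr 1
      have hval : (Finset.univ.val.filter (fun e => tB e = φV i)) =
          Multiset.map φE (Finset.univ.val.filter (fun e => tG e = i)) := by
        have := key i
        have h2 := Finset.image_val_of_injOn (inj i)
        calc (Finset.univ.val.filter (fun e => tB e = φV i))
            = (Finset.univ.filter (fun e => tB e = φV i)).val := rfl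
          _ = ((Finset.univ.filter (fun e => tG e = i)).image φE).val := by rw [this]
          _ = Multiset.map φE (Finset.univ.filter (fun e => tG e = i)).val := h2
      rw [hval, Multiset.map_map]
      apply Multiset.map_congr rfl
      intro e he
      simp only [Function.comp_apply, hs]
      rfl
    have h1 := hcompG (fun i => v (φV i)) D hD0 hDk i0
    have h2 := hcompB v C hC0 hCk (φV i0)
    exact tendsto_nhds_unique h1 h2
  · have hVB : IsEmpty VB := by
      constructor
      intro b
      obtain ⟨g, _⟩ := hVsurj b
      exact hne ⟨g⟩
    have hVG : IsEmpty VG := not_nonempty_iff.mp hne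
    simp [Finset.univ_eq_empty]
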